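/- Let $F$ be a field, let $n \ge 3$, let $1 \le i \le n-2$, and let $z_1,\dots,z_{n+1} \in F$ be pairwise distinct. Then the Kleiss-Kuijf relation holds: $\sum_{\gamma \in (1,\dots,i) \,\shuffle\, (i+1,\dots,n-1)} \mathrm{PT}(n+1,\gamma_1,\dots,\gamma_{n-1},n) = (-1)^{n-i+1}\, \mathrm{PT}(n+1,1,\dots,i,n,n-1,n-2,\dots,i+1)$, where the sum runs over all shuffles $\gamma$ of the ordered lists $(1,\dots,i)$ and $(i+1,\dots,n-1)$. -/

import Mathlib

/-- The Parke-Taylor factor of a list of labels `l`, with points `z`: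
`∏ m, (z l_m - z l_{m+1})⁻¹`, indices read cyclically. -/
noncomputable def PTl {F : Type*} [Field F] (z : ℕ → F) (l : List ℕ) : F :=
  ∏ m : Fin l.length, (z (l.get m) - z (l.get (finRotate l.length m)))⁻¹

section KKaux
variable {F : Type*} [Field F]

noncomputable def Gc (z : ℕ → F) : ℕ → ℕ → List ℕ → F
  | a, b, [] => (z a - z b)⁻¹
  | a, b, p :: l => (z a - z p)⁻¹ * Gc z p b l

@[simp] lemma Gc_nil (z : ℕ → F) (a b : ℕ) : Gc z a b [] = (z a - z b)⁻¹ := rfl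
@[simp] lemma Gc_cons (z : ℕ → F) (a b p : ℕ) (l : List ℕ) :
    Gc z a b (p :: l) = (z a - z p)⁻¹ * Gc z p b l := rfl

lemma Gc_append (z : ℕ → F) (c p : ℕ) (m : List ℕ) :
    ∀ (l : List ℕ) (a : ℕ), Gc z a c (l ++ p :: m) = Gc z a p l * Gc z p c m := by
  intro l
  induction l with
  | nil => intro a; simp
  | cons q l ih => intro a; simp [ih, mul_assoc]

lemma Gc_concat (z : ℕ → F) (a b c : ℕ) (l : List ℕ) :
    Gc z a c (l ++ [b]) = Gc z a b l * (z b - z c)⁻¹ := by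
  rw [Gc_append z c b [] l a, Gc_nil]

lemma Gc_reverse (z : ℕ → F) (b : ℕ) :
    ∀ (l : List ℕ) (a : ℕ), Gc z b a l.reverse = (-1) ^ (l.length + 1) * Gc z a b l := by
  intro l
  induction l with
  | nil =>
    intro a
    simp only [List.reverse_nil, Gc_nil, List.length_nil, pow_one, zero_add]
    rw [show z b - z a = -(z a - z b) by ring, inv_neg]
    ring
  | cons q l ih =>
    intro a
    rw [List.reverse_cons, Gc_concat, ih q, Gc_cons,
      show z q - z a = -(z a - z q) by ring, inv_neg]
    simp only [List.length_cons]
    ring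

lemma zip_prod (z : ℕ → F) :
    ∀ (xs : List ℕ) (x e : ℕ),
      (List.zipWith (fun u v => (z u - z v)⁻¹) (x :: xs) (xs ++ [e])).prod = Gc z x e xs := by
  intro xs
  induction xs with
  | nil => intro x e; simp
  | cons p xs ih => intro x e; simp [ih p e]

lemma PTl_cons (z : ℕ → F) (x : ℕ) (xs : List ℕ) : PTl z (x :: xs) = Gc z x x xs := by
  have h : List.ofFn (fun m : Fin (x :: xs).length =>
      (z ((x :: xs).get m) - z ((x :: xs).get (finRotate (x :: xs).length m)))⁻¹) =
      List.zipWith (fun u v => (z u - z v)⁻¹) (x :: xs) ((x :: xs).rotate 1) := by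
    apply List.ext_getElem
    · simp
    · intro i h1 h2
      simp only [List.getElem_ofFn, List.getElem_zipWith, List.getElem_rotate,
        List.get_eq_getElem, List.length_cons]
      congr 2
      refine congrArg z (getElem_congr rfl ?_ _)
      rw [finRotate_succ_apply, Fin.val_add, Fin.val_one']
      exact Nat.add_mod_mod _ _ _
  have := List.prod_ofFn (f := fun m : Fin (x :: xs).length =>
      (z ((x :: xs).get m) - z ((x :: xs).get (finRotate (x :: xs).length m)))⁻¹)
  rw [PTl, ← this, h, show (1 : ℕ) = 0 + 1 from rfl, List.rotate_cons_succ, List.rotate_zero,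
    zip_prod]

lemma PT_decomp (z : ℕ → F) (a b : ℕ) (l : List ℕ) :
    PTl z (a :: (l ++ [b])) = Gc z a b l * (z b - z a)⁻¹ := by
  rw [PTl_cons, Gc_concat]

end KKaux

def Sh (α β : List ℕ) : Finset (List ℕ) :=
  (α ++ β).permutations.toFinset.filter (fun γ => α.Sublist γ ∧ β.Sublist γ)

lemma mem_Sh {α β γ : List ℕ} :
    γ ∈ Sh α β ↔ γ.Perm (α ++ β) ∧ α.Sublist γ ∧ β.Sublist γ := by
  simp [Sh, List.mem_permutations]

lemma Sh_nil_left (β : List ℕ) : Sh [] β = {β} := by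
  ext γ
  rw [mem_Sh, Finset.mem_singleton]
  constructor
  · rintro ⟨h1, -, h2⟩
    exact (h2.eq_of_length (h1.length_eq.symm ▸ rfl)).symm
  · rintro rfl
    exact ⟨by simp, by simp, List.Sublist.refl _⟩

lemma Sh_nil_right (α : List ℕ) : Sh α [] = {α} := by
  ext γ
  rw [mem_Sh, Finset.mem_singleton]
  constructor
  · rintro ⟨h1, h2, -⟩
    refine (h2.eq_of_length ?_).symm
    rw [h1.length_eq]; simp
  · rintro rfl
    exact ⟨by simp, List.Sublist.refl _, by simp⟩

lemma Sh_cons_cons {p q : ℕ} {α β : List ℕ} (hnd : (p :: α ++ q :: β).Nodup) :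
    Sh (p :: α) (q :: β) =
      ((Sh α (q :: β)).image (p :: ·)) ∪ ((Sh (p :: α) β).image (q :: ·)) := by
  have hpq : p ≠ q := by
    rcases List.nodup_cons.mp hnd with ⟨hp, -⟩
    intro h; exact hp (by simp [h])
  ext γ
  rw [mem_Sh, Finset.mem_union, Finset.mem_image, Finset.mem_image]
  constructor
  · rintro ⟨hperm, hs1, hs2⟩
    cases γ with
    | nil =>
      have := hperm.length_eq
      simp at this
    | cons h γ' =>
      have hγnd : (h :: γ').Nodup := hperm.nodup_iff.mpr hnd
      have hhd : h = p ∨ h = q := by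
        by_contra hcon
        push_neg at hcon
        obtain ⟨hp, hq⟩ := hcon
        have h1 : (p :: α).Sublist γ' := by
          cases hs1 with
          | cons _ hh => exact hh
          | cons_cons => exact absurd rfl hp
        have h2 : (q :: β).Sublist γ' := by
          cases hs2 with
          | cons _ hh => exact hh
          | cons_cons => exact absurd rfl hq
        have hmem : h ∈ p :: α ++ q :: β := hperm.subset List.mem_cons_self
        have hγ : h ∉ γ' := (List.nodup_cons.mp hγnd).1
        rcases (by simpa using hmem : h = p ∨ h ∈ α ∨ h = q ∨ h ∈ β) with rfl | hA | rfl | hB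
        · exact hp rfl
        · exact hγ (h1.subset (List.mem_cons_of_mem _ hA))
        · exact hq rfl
        · exact hγ (h2.subset (List.mem_cons_of_mem _ hB))
      rcases hhd with rfl | rfl
      · left
        refine ⟨γ', mem_Sh.mpr ⟨?_, ?_, ?_⟩, rfl⟩
        · exact hperm.cons_inv
        · exact List.cons_sublist_cons.mp hs1
        · cases hs2 with
          | cons _ hh => exact hh
          | cons_cons => exact absurd rfl hpq.symm
      · right
        refine ⟨γ', mem_Sh.mpr ⟨?_, ?_, ?_⟩, rfl⟩
        · have : (h :: γ').Perm (h :: (p :: α ++ β)) :=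
            hperm.trans List.perm_middle
          exact this.cons_inv
        · cases hs1 with
          | cons _ hh => exact hh
          | cons_cons => exact absurd rfl hpq
        · exact List.cons_sublist_cons.mp hs2
  · rintro (⟨γ', hγ', rfl⟩ | ⟨γ', hγ', rfl⟩) <;> rw [mem_Sh] at hγ'
    · exact ⟨hγ'.1.cons p, List.cons_sublist_cons.mpr hγ'.2.1, hγ'.2.2.cons p⟩
    · refine ⟨?_, hγ'.2.1.cons q, List.cons_sublist_cons.mpr hγ'.2.2⟩
      exact (hγ'.1.cons q).trans List.perm_middle.symm

section KKstar
variable {F : Type*} [Field F]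

lemma zne {z : ℕ → F} {L : List ℕ} (hnd : (L.map z).Nodup) {x y : ℕ}
    (hx : x ∈ L) (hy : y ∈ L) (hxy : x ≠ y) : z x ≠ z y :=
  fun h => hxy (List.inj_on_of_nodup_map hnd hx hy h)

lemma map_nodup_of_subperm (z : ℕ → F) {l₁ l₂ : List ℕ} (h : l₁.Subperm l₂)
    (hnd : (l₂.map z).Nodup) : (l₁.map z).Nodup := by
  obtain ⟨l, hperm, hsub⟩ := h
  exact ((hperm.map z).nodup_iff).mp (hnd.sublist (hsub.map z))

lemma star (z : ℕ → F) (b : ℕ) :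
    ∀ (k : ℕ) (α β : List ℕ) (a : ℕ), α.length + β.length ≤ k →
      ((a :: (α ++ β) ++ [b]).map z).Nodup →
      ∑ γ ∈ Sh α β, Gc z a b γ = (z a - z b) * Gc z a b α * Gc z a b β := by
  intro k
  induction k with
  | zero =>
    intro α β a hlen hnd
    have hα : α = [] := by cases α with | nil => rfl | cons _ _ => simp at hlen
    have hβ : β = [] := by cases β with | nil => rfl | cons _ _ => simp at hlen
    subst hα; subst hβ
    have hab : z a ≠ z b := zne hnd (by simp) (by simp) (by
      have h' := hnd.of_map
      simp at h'
      exact h')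
    rw [Sh_nil_left, Finset.sum_singleton, Gc_nil,
      mul_inv_cancel₀ (sub_ne_zero.mpr hab), one_mul]
  | succ k ih =>
    intro α β a hlen hnd
    have hab : z a ≠ z b := by
      refine zne hnd (by simp) (by simp) ?_
      have h' : (a :: ((α ++ β) ++ [b])).Nodup := by
        have := hnd.of_map
        rwa [List.cons_append] at this
      exact fun h => (List.nodup_cons.mp h').1 (by simp [h])
    rcases α with _ | ⟨p, α'⟩
    · rw [Sh_nil_left, Finset.sum_singleton, Gc_nil, mul_inv_cancel₀ (sub_ne_zero.mpr hab),
        one_mul]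
    rcases β with _ | ⟨q, β'⟩
    · rw [Sh_nil_right, Finset.sum_singleton, Gc_nil,
        mul_comm ((z a - z b) * Gc z a b (p :: α')) (z a - z b)⁻¹, ← mul_assoc,
        inv_mul_cancel₀ (sub_ne_zero.mpr hab), one_mul]
    -- main case
    have hndL : ((a :: (p :: α' ++ q :: β') ++ [b])).Nodup := hnd.of_map
    have hmid : (p :: α' ++ q :: β').Nodup := by
      refine hndL.sublist ?_
      exact (List.sublist_append_left _ _).cons a
    have hpq : p ≠ q := by
      rcases List.nodup_cons.mp hmid with ⟨hp, -⟩
      exact fun h => hp (by simp [h])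
    have hpmem : p ∈ a :: (p :: α' ++ q :: β') ++ [b] := by simp
    have hqmem : q ∈ a :: (p :: α' ++ q :: β') ++ [b] := by simp
    have hamem : a ∈ a :: (p :: α' ++ q :: β') ++ [b] := by simp
    have hndL' : (a :: ((p :: α' ++ q :: β') ++ [b])).Nodup := by
      rwa [List.cons_append] at hndL
    have hap : a ≠ p := fun h => (List.nodup_cons.mp hndL').1 (by simp [h])
    have haq : a ≠ q := fun h => (List.nodup_cons.mp hndL').1 (by simp [h])
    have hzap : z a ≠ z p := zne hnd hamem hpmem hap
    have hzaq : z a ≠ z q := zne hnd hamem hqmem haq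
    have hzpq : z p ≠ z q := zne hnd hpmem hqmem hpq
    -- the two IH instances
    have hnd1 : ((p :: (α' ++ q :: β') ++ [b]).map z).Nodup := by
      refine map_nodup_of_subperm z ?_ hnd
      exact (List.sublist_cons_self a _).subperm
    have hnd2 : ((q :: (p :: α' ++ β') ++ [b]).map z).Nodup := by
      refine map_nodup_of_subperm z ⟨(p :: α' ++ q :: β') ++ [b], ?_, ?_⟩ hnd
      · exact (List.perm_middle).append_right [b]
      · exact List.sublist_cons_self a _
    have ih1 := ih α' (q :: β') p (by simp at hlen ⊢; omega) hnd1
    have ih2 := ih (p :: α') β' q (by simp at hlen ⊢; omega) hnd2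
    have hdisj : Disjoint ((Sh α' (q :: β')).image (p :: ·))
        ((Sh (p :: α') β').image (q :: ·)) := by
      rw [Finset.disjoint_left]
      rintro γ h1 h2
      obtain ⟨γ₁, -, rfl⟩ := Finset.mem_image.mp h1
      obtain ⟨γ₂, -, heq⟩ := Finset.mem_image.mp h2
      injection heq with h1 _
      exact hpq h1.symm
    rw [Sh_cons_cons hmid, Finset.sum_union hdisj,
      Finset.sum_image (fun x _ y _ h => by simpa using h),
      Finset.sum_image (fun x _ y _ h => by simpa using h)]
    simp only [Gc_cons, ← Finset.mul_sum]
    rw [ih1, ih2]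
    rw [Gc_cons z p b q β', Gc_cons z q b p α']
    have e1 : z a - z p ≠ 0 := sub_ne_zero.mpr hzap
    have e2 : z a - z q ≠ 0 := sub_ne_zero.mpr hzaq
    have e3 : z p - z q ≠ 0 := sub_ne_zero.mpr hzpq
    have e4 : z q - z p ≠ 0 := sub_ne_zero.mpr hzpq.symm
    field_simp
    ring

end KKstar

/-- The Kleiss-Kuijf relation: summing `PT(n+1, γ, n)` over all shuffles `γ` of the
ordered lists `(1, …, i)` and `(i+1, …, n-1)` gives
`(-1)^(n-i+1) PT(n+1, 1, …, i, n, n-1, …, i+1)`. -/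
theorem stmt2 {F : Type*} [Field F] (n i : ℕ) (hn : 3 ≤ n) (hi1 : 1 ≤ i) (hi2 : i ≤ n - 2)
    (z : ℕ → F)
    (hz : ∀ a ∈ Finset.Icc 1 (n + 1), ∀ b ∈ Finset.Icc 1 (n + 1), z a = z b → a = b) :
    ∑ γ ∈ (List.range' 1 i ++ List.range' (i + 1) (n - 1 - i)).permutations.toFinset.filter
        (fun γ => List.Sublist (List.range' 1 i) γ ∧
          List.Sublist (List.range' (i + 1) (n - 1 - i)) γ),
      PTl z ([n + 1] ++ γ ++ [n]) =
    (-1 : F) ^ (n - i + 1) *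
      PTl z ([n + 1] ++ List.range' 1 i ++ [n] ++ (List.range' (i + 1) (n - 1 - i)).reverse) := by
  set α : List ℕ := List.range' 1 i with hαdef
  set β : List ℕ := List.range' (i + 1) (n - 1 - i) with hβdef
  have hcomb : α ++ β = List.range' 1 (n - 1) := by
    rw [hαdef, hβdef, show i + 1 = 1 + 1 * i by ring, List.range'_append]
    congr 1
    omega
  have hndmap : ((((n + 1) :: (α ++ β)) ++ [n]).map z).Nodup := by
    rw [hcomb]
    apply List.Nodup.map_on
    · intro x hx y hy hxy
      simp only [List.mem_append, List.mem_cons, List.mem_range'_1, List.mem_singleton,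
        List.mem_nil_iff, or_false] at hx hy
      exact hz x (by simp only [Finset.mem_Icc]; omega) y (by simp only [Finset.mem_Icc]; omega)
        hxy
    · rw [List.cons_append, List.nodup_cons]
      refine ⟨?_, ?_⟩
      · simp only [List.mem_append, List.mem_range'_1, List.mem_singleton]
        push_neg
        constructor
        · omega
        · omega
      · rw [List.nodup_append]
        refine ⟨List.nodup_range' .., by simp, ?_⟩
        intro x hx
        simp only [List.mem_range'_1] at hx
        simp only [List.mem_singleton]
        omega
  have hstar := star z n (α.length + β.length) α β (n + 1) le_rfl hndmap
  have hzab : z (n + 1) ≠ z n := by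
    intro h
    have := hz (n + 1) (by simp only [Finset.mem_Icc]; omega) n
      (by simp only [Finset.mem_Icc]; omega) h
    omega
  show ∑ γ ∈ Sh α β, PTl z ([n + 1] ++ γ ++ [n]) = _
  simp only [List.cons_append, List.nil_append, List.append_assoc, List.singleton_append]
  rw [Finset.sum_congr rfl (fun γ _ => PT_decomp z (n + 1) n γ), ← Finset.sum_mul, hstar,
    PTl_cons, Gc_append z (n + 1) n β.reverse α (n + 1), Gc_reverse z n β (n + 1),
    show β.length = n - 1 - i from List.length_range' ..]
  have hsign : (-1 : F) ^ (n - i + 1) * (-1) ^ (n - 1 - i + 1) = -1 := by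
    rw [← pow_add, show (n - i + 1) + (n - 1 - i + 1) = 2 * (n - i) + 1 by omega, pow_succ,
      pow_mul]
    norm_num
  have hinv : (z (n + 1) - z n) * (z (n + 1) - z n)⁻¹ = 1 :=
    mul_inv_cancel₀ (sub_ne_zero.mpr hzab)
  have h1 : (z n - z (n + 1))⁻¹ = -(z (n + 1) - z n)⁻¹ := by
    rw [show z n - z (n + 1) = -(z (n + 1) - z n) by ring, inv_neg]
  set A := Gc z (n + 1) n α
  set B := Gc z (n + 1) n β
  linear_combination ((z (n + 1) - z n) * A * B) * h1 - (A * B) * hinv - (A * B) * hsign
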